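/- Let 𝔏 be a finite set of L lines in ℝ³, r ≥ 2, and r' = ⌈(9/10)r⌉. Let 𝒵̃ be a finite collection of surfaces, and for each integer s ≥ 0 let 𝒵̃_s := { Z ∈ 𝒵̃ : |𝔏_Z| ∈ [2^s, 2^{s+1}) }. Suppose |𝒵̃_s| ≤ 2L·2^{-s} whenever 2^s > 2D·L^{1/2}, |𝒵̃| ≤ M, and for each Z, |P_{r'}(𝔏_Z)| ≤ C(|𝔏_Z|²·r^{-3} + |𝔏_Z|·r^{-1}) (Szemerédi–Trotter). Then, summing over all Z ∈ 𝒵̃ with |𝔏_Z| < L^{1/2+ε}, one has ∑ |P_{r'}(𝔏_Z)| ≤ C'·(L^{3/2+ε} r^{-2} + M·D²·L·r^{-2}) for an absolute constant C' (assuming 2 ≤ r ≤ 2L^{1/2}). -/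

import Mathlib

open Classical

def IsLine (s : Set (Fin 3 → ℝ)) : Prop :=
  ∃ a v : Fin 3 → ℝ, v ≠ 0 ∧ s = {x | ∃ t : ℝ, x = a + t • v}

/-- `nl 𝔏 Z` : the number of lines of `𝔏` contained in the surface `Z`. -/
noncomputable def nl (𝔏 : Finset (Set (Fin 3 → ℝ))) (Z : Set (Fin 3 → ℝ)) : ℕ :=
  {ℓ | ℓ ∈ 𝔏 ∧ ℓ ⊆ Z}.ncard

/-- `richZ 𝔏 Z r'` : the number of points lying on at least `r'` lines of `𝔏_Z`. -/
noncomputable def richZ (𝔏 : Finset (Set (Fin 3 → ℝ))) (Z : Set (Fin 3 → ℝ))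
    (r' : ℕ) : ℕ :=
  {x : Fin 3 → ℝ | r' ≤ {ℓ | ℓ ∈ 𝔏 ∧ ℓ ⊆ Z ∧ x ∈ ℓ}.ncard}.ncard

private lemma nl_le_card (𝔏 : Finset (Set (Fin 3 → ℝ))) (Z : Set (Fin 3 → ℝ)) :
    nl 𝔏 Z ≤ 𝔏.card := by
  have h : {ℓ | ℓ ∈ 𝔏 ∧ ℓ ⊆ Z} ⊆ (𝔏 : Set (Set (Fin 3 → ℝ))) := fun ℓ hℓ => hℓ.1
  simpa [nl, Set.ncard_coe_finset] using Set.ncard_le_ncard h 𝔏.finite_toSet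

private lemma geom_filter_bound (X : ℝ) (hX : 1 ≤ X) (N : ℕ) (P : ℕ → Prop)
    [DecidablePred P] (hP : ∀ s, P s → (2:ℝ)^s < X) :
    ∑ s ∈ (Finset.range N).filter P, (2:ℝ)^s ≤ 2 * X := by
  classical
  by_cases hex : ∃ m, m ≤ N ∧ (2:ℝ)^m < X
  · obtain ⟨m, hmN, hm⟩ := hex
    set K := Nat.findGreatest (fun s => (2:ℝ)^s < X) N with hK
    have hPK : (2:ℝ)^K < X := Nat.findGreatest_spec (P := fun s => (2:ℝ)^s < X) hmN hm
    have hsub : (Finset.range N).filter P ⊆ Finset.range (K+1) := by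
      intro s hs
      simp only [Finset.mem_filter, Finset.mem_range] at hs ⊢
      exact Nat.lt_succ_of_le (Nat.le_findGreatest hs.1.le (hP s hs.2))
    calc ∑ s ∈ (Finset.range N).filter P, (2:ℝ)^s
        ≤ ∑ s ∈ Finset.range (K+1), (2:ℝ)^s :=
          Finset.sum_le_sum_of_subset_of_nonneg hsub (by intros; positivity)
      _ = 2^(K+1) - 1 := by
          have := geom_sum_eq (by norm_num : (2:ℝ) ≠ 1) (K+1)
          rw [this]; norm_num
      _ ≤ 2 * X := by
          have : (2:ℝ)^(K+1) = 2 * 2^K := by ring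
          nlinarith [hPK]
  · have : ∑ s ∈ (Finset.range N).filter P, (2:ℝ)^s = 0 := by
      apply Finset.sum_eq_zero
      intro s hs
      simp only [Finset.mem_filter, Finset.mem_range] at hs
      exact absurd ⟨s, hs.1.le, hP s hs.2⟩ hex
    rw [this]; linarith

set_option maxHeartbeats 8000000 in
theorem stmt17 (C : ℝ) (hC : 0 ≤ C) :
    ∃ C' : ℝ, 0 < C' ∧
    ∀ (𝔏 𝒵 : Finset (Set (Fin 3 → ℝ))) (D M ε : ℝ) (r : ℕ),
      (∀ ℓ ∈ 𝔏, IsLine ℓ) →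
      1 ≤ D → 0 < ε → ε ≤ 1 / 2 → 2 ≤ r →
      (r : ℝ) ≤ 2 * Real.sqrt (𝔏.card) →
      (∀ s : ℕ, (2 : ℝ) ^ s > 2 * D * Real.sqrt (𝔏.card) →
        ({Z | Z ∈ 𝒵 ∧ 2 ^ s ≤ nl 𝔏 Z ∧ nl 𝔏 Z < 2 ^ (s + 1)}.ncard : ℝ)
          ≤ 2 * (𝔏.card : ℝ) * ((2 : ℝ) ^ s)⁻¹) →
      ((𝒵.card : ℝ) ≤ M) →
      (∀ Z ∈ 𝒵, (richZ 𝔏 Z ⌈(9 / 10 : ℝ) * r⌉₊ : ℝ)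
          ≤ C * ((nl 𝔏 Z : ℝ) ^ 2 * ((r : ℝ) ^ 3)⁻¹ + (nl 𝔏 Z : ℝ) * (r : ℝ)⁻¹)) →
      ∑ Z ∈ 𝒵, (if (nl 𝔏 Z : ℝ) < (𝔏.card : ℝ) ^ ((1 : ℝ) / 2 + ε)
          then (richZ 𝔏 Z ⌈(9 / 10 : ℝ) * r⌉₊ : ℝ) else 0)
        ≤ C' * ((𝔏.card : ℝ) ^ ((3 : ℝ) / 2 + ε) * ((r : ℝ) ^ 2)⁻¹
                + M * D ^ 2 * (𝔏.card : ℝ) * ((r : ℝ) ^ 2)⁻¹) := by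
  classical
  refine ⟨40 * C + 1, by positivity, ?_⟩
  intro 𝔏 𝒵 D M ε r _hlines hD hε hε2 hr hrL hdyad hM hST
  set Lr : ℝ := (𝔏.card : ℝ) with hLrdef
  set R : ℝ := (r : ℝ) with hRdef
  set Q : ℝ := Real.sqrt Lr with hQdef
  set X12 : ℝ := Lr ^ ((1:ℝ)/2 + ε) with hX12def
  have hR2 : (2:ℝ) ≤ R := by rw [hRdef]; exact_mod_cast hr
  have hR0 : (0:ℝ) < R := by linarith
  have hQ0 : 0 ≤ Q := Real.sqrt_nonneg _
  have hQ1 : (1:ℝ) ≤ Q := by linarith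
  have hQsq : Q ^ 2 = Lr := Real.sq_sqrt (by positivity)
  have hLr1 : (1:ℝ) ≤ Lr := by nlinarith
  have hLr0 : (0:ℝ) < Lr := by linarith
  have hD0 : (0:ℝ) ≤ D := by linarith
  have hQrpow : Q = Lr ^ ((1:ℝ)/2) := by rw [hQdef, Real.sqrt_eq_rpow]
  have hXe1 : (1:ℝ) ≤ Lr ^ ε := by
    have := Real.rpow_le_rpow_of_exponent_le hLr1 (le_of_lt hε)
    simpa using this
  have hXe0 : (0:ℝ) ≤ Lr ^ ε := by linarith
  have hX12_1 : (1:ℝ) ≤ X12 := by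
    have := Real.rpow_le_rpow_of_exponent_le hLr1 (by positivity : (0:ℝ) ≤ (1:ℝ)/2 + ε)
    simpa [hX12def] using this
  have hX12split : X12 = Q * Lr ^ ε := by
    rw [hX12def, hQrpow, ← Real.rpow_add hLr0]
  have h32split : Lr ^ ((3:ℝ)/2 + ε) = Lr * X12 := by
    rw [hX12def, show (3:ℝ)/2 + ε = 1 + ((1:ℝ)/2 + ε) by ring, Real.rpow_add hLr0,
      Real.rpow_one]
  -- reduce to a filtered sum
  rw [show (∑ Z ∈ 𝒵, (if (nl 𝔏 Z : ℝ) < X12 then (richZ 𝔏 Z ⌈(9/10:ℝ)*r⌉₊ : ℝ) else 0))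
      = ∑ Z ∈ 𝒵.filter (fun Z => (nl 𝔏 Z : ℝ) < X12), (richZ 𝔏 Z ⌈(9/10:ℝ)*r⌉₊ : ℝ)
      from (Finset.sum_filter _ _).symm]
  set 𝒵' : Finset (Set (Fin 3 → ℝ)) := 𝒵.filter (fun Z => (nl 𝔏 Z : ℝ) < X12) with h𝒵'
  rw [← Finset.sum_filter_add_sum_filter_not 𝒵' (fun Z => (nl 𝔏 Z : ℝ) < 4 * D * Q)]
  set AF := 𝒵'.filter (fun Z => (nl 𝔏 Z : ℝ) < 4 * D * Q) with hAF
  set BF := 𝒵'.filter (fun Z => ¬ (nl 𝔏 Z : ℝ) < 4 * D * Q) with hBF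
  -- PART A : surfaces with few lines
  have hAtotal : ∑ Z ∈ AF, (richZ 𝔏 Z ⌈(9/10:ℝ)*r⌉₊ : ℝ) ≤ M * (16*C*D^2*Lr*(R^2)⁻¹) := by
    have hb0 : (0:ℝ) ≤ 16*C*D^2*Lr*(R^2)⁻¹ := by positivity
    have hbA : ∀ Z ∈ AF, (richZ 𝔏 Z ⌈(9/10:ℝ)*r⌉₊ : ℝ) ≤ 16*C*D^2*Lr*(R^2)⁻¹ := by
      intro Z hZ
      simp only [hAF, h𝒵', Finset.mem_filter] at hZ
      obtain ⟨⟨hZ𝒵, -⟩, hsm⟩ := hZ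
      have hst := hST Z hZ𝒵
      set x : ℝ := (nl 𝔏 Z : ℝ) with hx
      have hn : (0:ℝ) ≤ x := Nat.cast_nonneg _
      have hnsq : x^2 ≤ 16*D^2*Lr := by nlinarith [mul_nonneg hD0 hQ0]
      have h1 : x^2*(R^3)⁻¹ ≤ 8*D^2*Lr*(R^2)⁻¹ := by
        rw [← div_eq_mul_inv, ← div_eq_mul_inv,
          div_le_div_iff₀ (by positivity) (by positivity)]
        nlinarith [mul_le_mul_of_nonneg_right hnsq (sq_nonneg R),
          mul_nonneg (mul_nonneg (by positivity : (0:ℝ) ≤ 8*D^2*Lr) (sq_nonneg R))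
            (by linarith : (0:ℝ) ≤ R - 2)]
      have hQR : Q * R ≤ 2 * Lr := by
        nlinarith [mul_nonneg (by linarith : (0:ℝ) ≤ 2*Q - R) hQ0]
      have h2 : x*R⁻¹ ≤ 8*D^2*Lr*(R^2)⁻¹ := by
        rw [← div_eq_mul_inv, ← div_eq_mul_inv,
          div_le_div_iff₀ (by positivity) (by positivity)]
        have hh1 : x * R^2 ≤ 4*D*Q*R^2 := mul_le_mul_of_nonneg_right hsm.le (sq_nonneg R)
        have hh2 : (4*D*R)*(Q*R) ≤ (4*D*R)*(2*Lr) :=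
          mul_le_mul_of_nonneg_left hQR (by positivity)
        have hDD : D*(8*Lr*R) ≤ D^2*(8*Lr*R) := by
          nlinarith [mul_nonneg (mul_nonneg (mul_nonneg (le_trans zero_le_one hD) hLr0.le)
            hR0.le) (sub_nonneg.2 hD)]
        nlinarith [hh1, hh2, hDD]
      calc (richZ 𝔏 Z ⌈(9/10:ℝ)*r⌉₊ : ℝ) ≤ C * (x^2*(R^3)⁻¹ + x*R⁻¹) := hst
        _ ≤ C * (16*D^2*Lr*(R^2)⁻¹) :=
            mul_le_mul_of_nonneg_left (by linarith) hC
        _ = 16*C*D^2*Lr*(R^2)⁻¹ := by ring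
    calc ∑ Z ∈ AF, (richZ 𝔏 Z ⌈(9/10:ℝ)*r⌉₊ : ℝ)
        ≤ AF.card • (16*C*D^2*Lr*(R^2)⁻¹) := Finset.sum_le_card_nsmul _ _ _ hbA
      _ = (AF.card:ℝ) * (16*C*D^2*Lr*(R^2)⁻¹) := nsmul_eq_mul _ _
      _ ≤ M * (16*C*D^2*Lr*(R^2)⁻¹) := by
          apply mul_le_mul_of_nonneg_right _ hb0
          have h1 : AF.card ≤ 𝒵.card :=
            le_trans (Finset.card_le_card (Finset.filter_subset _ _))
              (Finset.card_le_card (Finset.filter_subset _ _))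
          calc (AF.card:ℝ) ≤ (𝒵.card:ℝ) := by exact_mod_cast h1
            _ ≤ M := hM
  -- PART B : dyadic decomposition
  set S : Finset ℕ := (Finset.range (𝔏.card + 1)).filter
      (fun s => 2*D*Q < (2:ℝ)^s ∧ (2:ℝ)^s < X12) with hS
  have hBtotal : ∑ Z ∈ BF, (richZ 𝔏 Z ⌈(9/10:ℝ)*r⌉₊ : ℝ)
      ≤ 24 * C * Lr ^ ((3:ℝ)/2+ε) * (R^2)⁻¹ := by
    have hmaps : ∀ Z ∈ BF, Nat.log 2 (nl 𝔏 Z) ∈ S := by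
      intro Z hZ
      simp only [hBF, h𝒵', Finset.mem_filter, not_lt] at hZ
      obtain ⟨⟨hZ𝒵, hZsm⟩, hbig⟩ := hZ
      have hne : nl 𝔏 Z ≠ 0 := by
        intro h0
        rw [h0] at hbig
        push_cast at hbig
        nlinarith
      set s := Nat.log 2 (nl 𝔏 Z) with hsd
      have hlow : (2:ℝ)^s ≤ (nl 𝔏 Z : ℝ) := by
        exact_mod_cast Nat.pow_log_le_self 2 hne
      have hhigh : (nl 𝔏 Z : ℝ) < 2 * (2:ℝ)^s := by
        have h := Nat.lt_pow_succ_log_self (by norm_num : 1 < 2) (nl 𝔏 Z)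
        have h' : (nl 𝔏 Z : ℝ) < (2:ℝ)^(s+1) := by exact_mod_cast h
        rw [pow_succ] at h'
        linarith
      simp only [hS, Finset.mem_filter, Finset.mem_range]
      refine ⟨?_, by linarith, lt_of_le_of_lt hlow hZsm⟩
      exact Nat.lt_succ_of_le (le_trans (Nat.log_le_self 2 _) (nl_le_card 𝔏 Z))
    rw [← Finset.sum_fiberwise_of_maps_to hmaps (fun Z => (richZ 𝔏 Z ⌈(9/10:ℝ)*r⌉₊ : ℝ))]
    have hfibers : ∀ s ∈ S, ∑ Z ∈ BF.filter (fun Z => Nat.log 2 (nl 𝔏 Z) = s),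
        (richZ 𝔏 Z ⌈(9/10:ℝ)*r⌉₊ : ℝ)
        ≤ (8*C*Lr*(R^3)⁻¹) * (2:ℝ)^s + 4*C*Lr*R⁻¹ := by
      intro s hs
      simp only [hS, Finset.mem_filter, Finset.mem_range] at hs
      obtain ⟨-, hs1, hs2⟩ := hs
      set F := BF.filter (fun Z => Nat.log 2 (nl 𝔏 Z) = s) with hF
      have hb0 : (0:ℝ) ≤ C * (4*(4:ℝ)^s*(R^3)⁻¹ + 2*(2:ℝ)^s*R⁻¹) := by positivity
      have h4s : (4:ℝ)^s = (2:ℝ)^s * (2:ℝ)^s := by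
        rw [show (4:ℝ) = 2*2 by norm_num, mul_pow]
      have hterm : ∀ Z ∈ F, (richZ 𝔏 Z ⌈(9/10:ℝ)*r⌉₊ : ℝ)
          ≤ C * (4*(4:ℝ)^s*(R^3)⁻¹ + 2*(2:ℝ)^s*R⁻¹) := by
        intro Z hZ
        simp only [hF, hBF, h𝒵', Finset.mem_filter, not_lt] at hZ
        obtain ⟨⟨⟨hZ𝒵, -⟩, -⟩, hlog⟩ := hZ
        have hup : (nl 𝔏 Z : ℝ) < 2*(2:ℝ)^s := by
          have h := Nat.lt_pow_succ_log_self (by norm_num : 1 < 2) (nl 𝔏 Z)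
          rw [hlog] at h
          have h' : (nl 𝔏 Z : ℝ) < (2:ℝ)^(s+1) := by exact_mod_cast h
          rw [pow_succ] at h'
          linarith
        have hst := hST Z hZ𝒵
        have hn : (0:ℝ) ≤ (nl 𝔏 Z : ℝ) := Nat.cast_nonneg _
        have hnsq : (nl 𝔏 Z : ℝ)^2 ≤ 4*(4:ℝ)^s := by rw [h4s]; nlinarith
        refine hst.trans ?_
        have := mul_le_mul_of_nonneg_left
          (add_le_add (mul_le_mul_of_nonneg_right hnsq (by positivity : (0:ℝ) ≤ (R^3)⁻¹))
            (mul_le_mul_of_nonneg_right hup.le (by positivity : (0:ℝ) ≤ R⁻¹))) hC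
        convert this using 2 <;> ring
      have hcard : ((F.card : ℕ) : ℝ) ≤ 2*Lr*((2:ℝ)^s)⁻¹ := by
        have hsubG : F ⊆ 𝒵.filter (fun Z => 2^s ≤ nl 𝔏 Z ∧ nl 𝔏 Z < 2^(s+1)) := by
          intro Z hZ
          simp only [hF, hBF, h𝒵', Finset.mem_filter, not_lt] at hZ ⊢
          obtain ⟨⟨⟨hZ𝒵, -⟩, hbig⟩, hlog⟩ := hZ
          have hne : nl 𝔏 Z ≠ 0 := by
            intro h0
            rw [h0] at hbig
            push_cast at hbig
            nlinarith
          refine ⟨hZ𝒵, ?_, ?_⟩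
          · rw [← hlog]; exact Nat.pow_log_le_self 2 hne
          · rw [← hlog]; exact Nat.lt_pow_succ_log_self (by norm_num) _
        have hGcast : (({Z | Z ∈ 𝒵 ∧ 2^s ≤ nl 𝔏 Z ∧ nl 𝔏 Z < 2^(s+1)} : Set _).ncard : ℝ)
            = ((𝒵.filter (fun Z => 2^s ≤ nl 𝔏 Z ∧ nl 𝔏 Z < 2^(s+1))).card : ℝ) := by
          congr 1
          rw [show {Z | Z ∈ 𝒵 ∧ 2^s ≤ nl 𝔏 Z ∧ nl 𝔏 Z < 2^(s+1)}
              = ↑(𝒵.filter (fun Z => 2^s ≤ nl 𝔏 Z ∧ nl 𝔏 Z < 2^(s+1))) by ext Z; simp]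
          exact Set.ncard_coe_finset _
        have hd := hdyad s hs1
        rw [hGcast] at hd
        calc ((F.card : ℕ) : ℝ)
            ≤ ((𝒵.filter (fun Z => 2^s ≤ nl 𝔏 Z ∧ nl 𝔏 Z < 2^(s+1))).card : ℝ) := by
              exact_mod_cast Finset.card_le_card hsubG
          _ ≤ 2*Lr*((2:ℝ)^s)⁻¹ := hd
      calc ∑ Z ∈ F, (richZ 𝔏 Z ⌈(9/10:ℝ)*r⌉₊ : ℝ)
          ≤ F.card • (C * (4*(4:ℝ)^s*(R^3)⁻¹ + 2*(2:ℝ)^s*R⁻¹)) :=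
            Finset.sum_le_card_nsmul _ _ _ hterm
        _ = (F.card:ℝ) * (C * (4*(4:ℝ)^s*(R^3)⁻¹ + 2*(2:ℝ)^s*R⁻¹)) := nsmul_eq_mul _ _
        _ ≤ (2*Lr*((2:ℝ)^s)⁻¹) * (C * (4*(4:ℝ)^s*(R^3)⁻¹ + 2*(2:ℝ)^s*R⁻¹)) :=
            mul_le_mul_of_nonneg_right hcard hb0
        _ = (8*C*Lr*(R^3)⁻¹) * (2:ℝ)^s + 4*C*Lr*R⁻¹ := by
            have h2s : ((2:ℝ)^s) ≠ 0 := by positivity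
            rw [h4s]
            field_simp
            ring
    have hgeo : ∑ s ∈ S, (2:ℝ)^s ≤ 2 * X12 := by
      rw [hS]
      exact geom_filter_bound X12 hX12_1 _ _ (fun s hs => hs.2)
    have hScard : ((S.card : ℕ) : ℝ) ≤ 2 * Lr^ε := by
      rcases S.eq_empty_or_nonempty with hSe | hSne
      · rw [hSe]; simp; positivity
      · set s₀ := S.min' hSne with hs₀def
        have hs₀mem := S.min'_mem hSne
        simp only [hS, Finset.mem_filter, Finset.mem_range] at hs₀mem
        obtain ⟨-, hs₀1, -⟩ := hs₀mem
        have hsub : S ⊆ Finset.Icc s₀ (s₀ + ⌊Lr^ε/2⌋₊) := by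
          intro s hs
          have hle : s₀ ≤ s := S.min'_le s hs
          simp only [hS, Finset.mem_filter, Finset.mem_range] at hs
          obtain ⟨-, -, hsu⟩ := hs
          rw [Finset.mem_Icc]
          refine ⟨hle, ?_⟩
          have key : ((s - s₀ : ℕ) : ℝ) ≤ Lr^ε/2 := by
            have hpow : (2:ℝ)^(s - s₀) * (2:ℝ)^s₀ = (2:ℝ)^s := by
              rw [← pow_add, Nat.sub_add_cancel hle]
            have hcastlt : ((s - s₀:ℕ):ℝ) < (2:ℝ)^(s-s₀) := by
              exact_mod_cast (Nat.lt_two_pow_self (n := s - s₀))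
            have t0 : (0:ℝ) < (2:ℝ)^(s-s₀) := by positivity
            have hq : (2:ℝ)^(s-s₀) * (2*Q) < Q * Lr^ε := by
              have h1 : (2:ℝ)^(s-s₀) * (2*Q) ≤ (2:ℝ)^(s-s₀) * (2*D*Q) := by
                apply mul_le_mul_of_nonneg_left _ t0.le
                nlinarith
              have h2 : (2:ℝ)^(s-s₀) * (2*D*Q) ≤ (2:ℝ)^(s-s₀) * (2:ℝ)^s₀ :=
                mul_le_mul_of_nonneg_left hs₀1.le t0.le
              rw [hpow] at h2
              calc (2:ℝ)^(s-s₀) * (2*Q) ≤ (2:ℝ)^s := h1.trans h2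
                _ < X12 := hsu
                _ = Q * Lr^ε := hX12split
            have hQpos : (0:ℝ) < Q := by linarith
            have h' : (2 * (2:ℝ)^(s-s₀)) * Q < (Lr^ε) * Q := by nlinarith
            have h2t : 2 * ((2:ℝ)^(s-s₀)) < Lr^ε := lt_of_mul_lt_mul_right h' hQpos.le
            linarith
          have := Nat.le_floor key
          omega
        have hcard := Finset.card_le_card hsub
        rw [Nat.card_Icc] at hcard
        have hfl : (⌊Lr^ε/2⌋₊ : ℝ) ≤ Lr^ε/2 := Nat.floor_le (by positivity)
        have hc2 : S.card ≤ ⌊Lr^ε/2⌋₊ + 1 := by omega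
        have hc3 : ((S.card : ℕ):ℝ) ≤ (⌊Lr^ε/2⌋₊ : ℝ) + 1 := by exact_mod_cast hc2
        linarith
    calc ∑ s ∈ S, ∑ Z ∈ BF.filter (fun Z => Nat.log 2 (nl 𝔏 Z) = s),
          (richZ 𝔏 Z ⌈(9/10:ℝ)*r⌉₊ : ℝ)
        ≤ ∑ s ∈ S, ((8*C*Lr*(R^3)⁻¹) * (2:ℝ)^s + 4*C*Lr*R⁻¹) :=
          Finset.sum_le_sum hfibers
      _ = (8*C*Lr*(R^3)⁻¹) * (∑ s ∈ S, (2:ℝ)^s) + (S.card:ℝ) * (4*C*Lr*R⁻¹) := by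
          rw [Finset.sum_add_distrib, ← Finset.mul_sum, Finset.sum_const, nsmul_eq_mul]
      _ ≤ (8*C*Lr*(R^3)⁻¹) * (2 * X12) + (2 * Lr^ε) * (4*C*Lr*R⁻¹) :=
          add_le_add (mul_le_mul_of_nonneg_left hgeo (by positivity))
            (mul_le_mul_of_nonneg_right hScard (by positivity))
      _ ≤ 24 * C * Lr ^ ((3:ℝ)/2+ε) * (R^2)⁻¹ := by
          have h3 : 2*(R^3)⁻¹ ≤ (R^2)⁻¹ := by
            rw [show (2:ℝ)*(R^3)⁻¹ = 2/(R^3) by ring, show ((R:ℝ)^2)⁻¹ = 1/(R^2) by ring,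
              div_le_div_iff₀ (by positivity) (by positivity)]
            nlinarith [sq_nonneg R]
          have hinv1 : R⁻¹ ≤ 2*Q*(R^2)⁻¹ := by
            rw [show (R:ℝ)⁻¹ = R*(R^2)⁻¹ by field_simp]
            exact mul_le_mul_of_nonneg_right hrL (by positivity)
          have e1 : (8*C*Lr*(R^3)⁻¹) * (2*X12) ≤ 8*C*Lr*X12*(R^2)⁻¹ := by
            calc (8*C*Lr*(R^3)⁻¹) * (2*X12) = (8*C*Lr*X12)*(2*(R^3)⁻¹) := by ring
              _ ≤ (8*C*Lr*X12)*(R^2)⁻¹ := by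
                  apply mul_le_mul_of_nonneg_left h3
                  have h0 : (0:ℝ) ≤ X12 := by linarith
                  positivity
              _ = 8*C*Lr*X12*(R^2)⁻¹ := by ring
          have e2 : (2*Lr^ε)*(4*C*Lr*R⁻¹) ≤ 16*C*Lr*X12*(R^2)⁻¹ := by
            calc (2*Lr^ε)*(4*C*Lr*R⁻¹) = (8*C*Lr^ε*Lr)*R⁻¹ := by ring
              _ ≤ (8*C*Lr^ε*Lr)*(2*Q*(R^2)⁻¹) := by
                  apply mul_le_mul_of_nonneg_left hinv1
                  positivity
              _ = 16*C*Lr*(Q*Lr^ε)*(R^2)⁻¹ := by ring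
              _ = 16*C*Lr*X12*(R^2)⁻¹ := by rw [← hX12split]
          calc (8*C*Lr*(R^3)⁻¹) * (2 * X12) + (2 * Lr^ε) * (4*C*Lr*R⁻¹)
              ≤ 8*C*Lr*X12*(R^2)⁻¹ + 16*C*Lr*X12*(R^2)⁻¹ := add_le_add e1 e2
            _ = 24*C*(Lr*X12)*(R^2)⁻¹ := by ring
            _ = 24*C*Lr ^ ((3:ℝ)/2+ε)*(R^2)⁻¹ := by rw [h32split]
  -- combine the two parts
  have hM0 : (0:ℝ) ≤ M := le_trans (Nat.cast_nonneg _) hM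
  have hX : (0:ℝ) ≤ Lr ^ ((3:ℝ)/2+ε) * (R^2)⁻¹ := by positivity
  have hY : (0:ℝ) ≤ M*D^2*Lr*(R^2)⁻¹ := by positivity
  nlinarith [hAtotal, hBtotal, hX, hY, mul_nonneg hC hX, mul_nonneg hC hY]
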